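/- Let X be a context space with distribution D, A a finite set of K actions, f : X × A → [0,1] a predictor with greedy action â(x) = argmax_a f(x,a), γ > 0, and p(·|x) the inverse-gap distribution induced by f and γ. Let Q be the product measure on A^X with Q({π : π(x)=a}) = p(a|x). Then ∫_{A^X} E_{x∼D}[f(x,â(x)) - f(x,π(x))] dQ(π) ≤ K/γ. -/

import Mathlib

open MeasureTheory Finset

lemma pi_measurableSet_countable_dep {X A : Type*} [MeasurableSpace A]
    {B : Set (X → A)} (hB : MeasurableSet B) :
    ∃ S : Set X, S.Countable ∧
      ∀ π π' : X → A, (∀ x ∈ S, π x = π' x) → (π ∈ B ↔ π' ∈ B) := by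
  let P : Set (X → A) → Prop := fun B => ∃ S : Set X, S.Countable ∧
      ∀ π π' : X → A, (∀ x ∈ S, π x = π' x) → (π ∈ B ↔ π' ∈ B)
  let m : MeasurableSpace (X → A) :=
    { MeasurableSet' := P
      measurableSet_empty := ⟨∅, Set.countable_empty, by simp⟩
      measurableSet_compl := by
        rintro B ⟨S, hS, hdep⟩
        exact ⟨S, hS, fun π π' h => by simp [hdep π π' h]⟩
      measurableSet_iUnion := by
        intro g hg
        choose S hSc hdep using hg
        refine ⟨⋃ n, S n, Set.countable_iUnion hSc, fun π π' h => ?_⟩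
        simp only [Set.mem_iUnion]
        constructor
        · rintro ⟨n, hn⟩
          exact ⟨n, (hdep n π π' (fun x hx => h x (Set.mem_iUnion.2 ⟨n, hx⟩))).1 hn⟩
        · rintro ⟨n, hn⟩
          exact ⟨n, (hdep n π π' (fun x hx => h x (Set.mem_iUnion.2 ⟨n, hx⟩))).2 hn⟩ }
  have hle : (MeasurableSpace.pi : MeasurableSpace (X → A)) ≤ m := by
    refine iSup_le fun x => ?_
    intro B hBm
    obtain ⟨b, -, rfl⟩ := hBm
    exact ⟨{x}, Set.countable_singleton x,
      fun π π' h => by simp [Set.mem_preimage, h x (Set.mem_singleton x)]⟩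
  exact hle B hB

lemma pi_measurable_countable_dep {X A : Type*} [MeasurableSpace A]
    {G : (X → A) → ℝ} (hG : Measurable G) :
    ∃ S : Set X, S.Countable ∧
      ∀ π π' : X → A, (∀ x ∈ S, π x = π' x) → G π = G π' := by
  have h : ∀ q : ℚ, ∃ S : Set X, S.Countable ∧
      ∀ π π' : X → A, (∀ x ∈ S, π x = π' x) →
        (π ∈ G ⁻¹' (Set.Iio (q : ℝ)) ↔ π' ∈ G ⁻¹' (Set.Iio (q : ℝ))) :=
    fun q => pi_measurableSet_countable_dep (hG measurableSet_Iio)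
  choose S hSc hdep using h
  refine ⟨⋃ q, S q, Set.countable_iUnion hSc, fun π π' h => ?_⟩
  by_contra hne
  rcases lt_or_gt_of_ne hne with hlt | hlt
  · obtain ⟨q, hq1, hq2⟩ := exists_rat_btwn hlt
    have := (hdep q π π' (fun x hx => h x (Set.mem_iUnion.2 ⟨q, hx⟩))).1 hq1
    exact absurd this (not_lt.2 hq2.le)
  · obtain ⟨q, hq1, hq2⟩ := exists_rat_btwn hlt
    have := (hdep q π' π (fun x hx => (h x (Set.mem_iUnion.2 ⟨q, hx⟩)).symm)).1 hq1
    exact absurd this (not_lt.2 hq2.le)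

theorem stmt_7 {X : Type*} [MeasurableSpace X]
    (D : Measure X) [IsProbabilityMeasure D]
    {A : Type*} [Fintype A] [DecidableEq A]
    [MeasurableSpace A] [MeasurableSingletonClass A]
    (hK : 2 ≤ Fintype.card A)
    (f : X → A → ℝ) (hf01 : ∀ x a, f x a ∈ Set.Icc (0:ℝ) 1)
    (hf_meas : ∀ a, Measurable fun x => f x a)
    (ahat : X → A) (hahat_meas : Measurable ahat)
    (hahat : ∀ x a, f x a ≤ f x (ahat x))
    (γ : ℝ) (hγ : 0 < γ)
    (p : X → A → ℝ)
    (hp_ne : ∀ x, ∀ a, a ≠ ahat x →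
      p x a = 1 / ((Fintype.card A : ℝ) + γ * (f x (ahat x) - f x a)))
    (hp_hat : ∀ x, p x (ahat x) = 1 - ∑ a ∈ Finset.univ.erase (ahat x), p x a)
    (Q : Measure (X → A)) [IsProbabilityMeasure Q]
    (hQ : ∀ x a, Q {π : X → A | π x = a} = ENNReal.ofReal (p x a))
    (hQ_int : Integrable (fun π : X → A =>
      ∫ x, (f x (ahat x) - f x (π x)) ∂D) Q) :
    ∫ π : X → A, (∫ x, (f x (ahat x) - f x (π x)) ∂D) ∂Q
      ≤ (Fintype.card A : ℝ) / γ := by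
  classical
  set K : ℕ := Fintype.card A with hKdef
  -- basic facts about gaps
  set g : X → A → ℝ := fun x a => f x (ahat x) - f x a with hgdef
  have hg_nonneg : ∀ x a, 0 ≤ g x a := fun x a => sub_nonneg.2 (hahat x a)
  have hg_le_one : ∀ x a, g x a ≤ 1 := fun x a => by
    have h1 := (hf01 x (ahat x)).2
    have h2 := (hf01 x a).1
    simp only [hgdef]; linarith
  have hg_hat : ∀ x, g x (ahat x) = 0 := fun x => sub_self _
  -- X nonempty
  have hXne : Nonempty X := by
    by_contra h
    have huniv : (Set.univ : Set X) = ∅ := Set.univ_eq_empty_iff.2 (not_nonempty_iff.1 h)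
    have h1 : D Set.univ = 1 := measure_univ
    rw [huniv, measure_empty] at h1
    exact zero_ne_one h1
  obtain ⟨x₀⟩ := hXne
  set G : (X → A) → ℝ := fun π => ∫ x, (f x (ahat x) - f x (π x)) ∂D with hGdef
  -- measurable version
  have hG_aesm : AEStronglyMeasurable G Q := hQ_int.aestronglyMeasurable
  set G' : (X → A) → ℝ := hG_aesm.mk G with hG'def
  have hG'sm : StronglyMeasurable G' := hG_aesm.stronglyMeasurable_mk
  have hGae : G =ᵐ[Q] G' := hG_aesm.ae_eq_mk
  obtain ⟨M, hMsub, hMmeas, hMnull⟩ :=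
    exists_measurable_superset_of_null (ae_iff.1 hGae)
  obtain ⟨S₁, hS₁c, hdep₁⟩ := pi_measurableSet_countable_dep hMmeas
  obtain ⟨S₂, hS₂c, hdep₂⟩ := pi_measurable_countable_dep hG'sm.measurable
  set S : Set X := S₁ ∪ S₂ ∪ {x₀} with hSdef
  have hSc : S.Countable := ((hS₁c.union hS₂c).union (Set.countable_singleton x₀))
  have hSne : S.Nonempty := ⟨x₀, Or.inr rfl⟩
  obtain ⟨e, hrange⟩ := hSc.exists_eq_range hSne
  -- the hybrid map
  set Ψ : (X → A) → (X → A) := fun π x => if x ∈ S then π x else ahat x with hΨdef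
  have hΨ_agree : ∀ π, ∀ x ∈ S, π x = Ψ π x := fun π x hx => by
    simp only [hΨdef, if_pos hx]
  set v : (X → A) → ℝ := fun π => G (Ψ π) with hvdef
  -- a.e. equality G = v
  have hGv : G =ᵐ[Q] v := by
    have hsub : {π | G π ≠ v π} ⊆ M := by
      intro π hπ
      by_contra hπM
      have hagr₁ : ∀ x ∈ S₁, π x = Ψ π x := fun x hx =>
        hΨ_agree π x (Or.inl (Or.inl hx))
      have hagr₂ : ∀ x ∈ S₂, π x = Ψ π x := fun x hx =>
        hΨ_agree π x (Or.inl (Or.inr hx))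
      have hΨM : Ψ π ∉ M := fun hc => hπM ((hdep₁ π (Ψ π) hagr₁).2 hc)
      have h1 : G π = G' π := by
        by_contra hc
        exact hπM (hMsub (by simpa using hc))
      have h2 : G (Ψ π) = G' (Ψ π) := by
        by_contra hc
        exact hΨM (hMsub (by simpa using hc))
      have h3 : G' π = G' (Ψ π) := hdep₂ π (Ψ π) hagr₂
      exact hπ (show G π = G (Ψ π) from (h1.trans h3).trans h2.symm)
    exact ae_iff.2 (measure_mono_null hsub hMnull)
  -- inseparability machinery
  set Insep : X → X → Prop := fun x y => ∀ B : Set X, MeasurableSet B → (x ∈ B ↔ y ∈ B)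
    with hInsepdef
  have hsep : ∀ n m : ℕ, ∃ B : Set X, MeasurableSet B ∧ e n ∈ B ∧
      (¬ Insep (e n) (e m) → e m ∉ B) := by
    intro n m
    by_cases h : Insep (e n) (e m)
    · exact ⟨Set.univ, MeasurableSet.univ, Set.mem_univ _, fun hc => absurd h hc⟩
    · simp only [hInsepdef, not_forall] at h
      obtain ⟨B, hBm, hB⟩ := h
      by_cases hn : e n ∈ B
      · refine ⟨B, hBm, hn, fun _ hm => hB ⟨fun _ => hm, fun _ => hn⟩⟩
      · refine ⟨Bᶜ, hBm.compl, hn, fun _ hm => ?_⟩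
        simp only [Set.mem_compl_iff] at hm
        exact hB ⟨fun h' => absurd h' hn, fun h' => absurd h' hm⟩
  choose B hBmeas hBmem hBsep using hsep
  set Chat : ℕ → Set X := fun n => ⋂ m, B n m with hChatdef
  have hChat_meas : ∀ n, MeasurableSet (Chat n) :=
    fun n => MeasurableSet.iInter (fun m => hBmeas n m)
  have hChat_self : ∀ n, e n ∈ Chat n := fun n => Set.mem_iInter.2 (fun m => hBmem n m)
  have hChat_insep : ∀ n m, e m ∈ Chat n → Insep (e n) (e m) := by
    intro n m hm
    by_contra hc
    exact hBsep n m hc (Set.mem_iInter.1 hm m)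
  set E : ℕ → Set X := fun n => Chat n \ ⋃ m, ⋃ (_ : m < n), Chat m with hEdef
  have hE_meas : ∀ n, MeasurableSet (E n) := fun n =>
    (hChat_meas n).diff (MeasurableSet.iUnion fun m => MeasurableSet.iUnion
      fun _ => hChat_meas m)
  set U : Set X := ⋃ n, Chat n with hUdef
  have hU_meas : MeasurableSet U := MeasurableSet.iUnion hChat_meas
  set nidx : X → ℕ := fun x => sInf {n | x ∈ Chat n} with hnidxdef
  have hE_mem_iff : ∀ x n, x ∈ E n ↔ x ∈ Chat n ∧ ∀ m < n, x ∉ Chat m := by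
    intro x n
    simp only [hEdef, Set.mem_diff, Set.mem_iUnion, not_exists]
  have hnidx_mem : ∀ x, x ∈ U → x ∈ E (nidx x) := by
    intro x hx
    obtain ⟨n, hn⟩ := Set.mem_iUnion.1 hx
    have hne : {n | x ∈ Chat n}.Nonempty := ⟨n, hn⟩
    refine (hE_mem_iff x _).2 ⟨(Nat.sInf_mem hne : nidx x ∈ {n | x ∈ Chat n}), fun m hm hmem => ?_⟩
    exact absurd (Nat.sInf_le hmem) (not_le.2 hm)
  have hE_nidx : ∀ x n, x ∈ E n → nidx x = n := by
    intro x n hx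
    obtain ⟨h1, h2⟩ := (hE_mem_iff x n).1 hx
    have hle : nidx x ≤ n := Nat.sInf_le h1
    rcases lt_or_eq_of_le hle with hlt | heq
    · have hmem : nidx x ∈ {k | x ∈ Chat k} := Nat.sInf_mem ⟨n, h1⟩
      exact absurd hmem (h2 _ hlt)
    · exact heq
  have hE_disj : Pairwise (Function.onFun Disjoint E) := by
    intro n m hnm
    refine Set.disjoint_left.2 fun x hxn hxm => ?_
    exact hnm ((hE_nidx x n hxn).symm.trans (hE_nidx x m hxm))
  have hUE : U = ⋃ n, E n := by
    apply Set.Subset.antisymm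
    · intro x hx
      exact Set.mem_iUnion.2 ⟨nidx x, hnidx_mem x hx⟩
    · refine Set.iUnion_subset fun n => ?_
      intro x hx
      exact Set.mem_iUnion.2 ⟨n, ((hE_mem_iff x n).1 hx).1⟩
  have hnidx_meas : Measurable nidx := by
    apply measurable_to_countable'
    intro n
    have : nidx ⁻¹' {n} = E n ∪ (if n = 0 then Uᶜ else ∅) := by
      ext x
      simp only [Set.mem_preimage, Set.mem_singleton_iff, Set.mem_union]
      constructor
      · intro hx
        by_cases hxU : x ∈ U
        · exact Or.inl (hx ▸ hnidx_mem x hxU)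
        · have : {k | x ∈ Chat k} = ∅ := by
            ext k; simp only [Set.mem_setOf_eq, Set.mem_empty_iff_false, iff_false]
            exact fun hc => hxU (Set.mem_iUnion.2 ⟨k, hc⟩)
          have h0 : nidx x = 0 := by simp [hnidxdef, this]
          rw [← hx, h0]
          simp [hxU]
      · intro hx
        rcases hx with hx | hx
        · exact hE_nidx x n hx
        · by_cases h0 : n = 0
          · simp only [h0, if_pos] at hx
            have : {k | x ∈ Chat k} = ∅ := by
              ext k; simp only [Set.mem_setOf_eq, Set.mem_empty_iff_false, iff_false]
              exact fun hc => hx (Set.mem_iUnion.2 ⟨k, hc⟩)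
            simp [h0, hnidxdef, this]
          · simp [h0] at hx
    rw [this]
    refine (hE_meas n).union ?_
    by_cases h0 : n = 0 <;> simp [h0, hU_meas.compl, MeasurableSet.empty]
  -- the ENNReal dominating function on policies
  set W : (X → A) → ENNReal := fun π => ∑' n, D (E n) * ENNReal.ofReal (g (e n) (π (e n)))
    with hWdef
  -- per-policy bound : v π ≤ (W π).toReal
  have hv_le : ∀ π, v π ≤ (W π).toReal := by
    intro π
    set h : X → ℝ := fun x => f x (ahat x) - f x (Ψ π x) with hhdef
    set c : ℕ → ℝ := fun n => g (e n) (π (e n)) with hcdef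
    set w : X → ℝ := fun x => Set.indicator U (fun y => c (nidx y)) x with hwdef
    have hw_meas : Measurable w :=
      ((measurable_from_nat (f := c)).comp hnidx_meas).indicator hU_meas
    have hc_nonneg : ∀ n, 0 ≤ c n := fun n => hg_nonneg (e n) (π (e n))
    have hc_le_one : ∀ n, c n ≤ 1 := fun n => hg_le_one (e n) (π (e n))
    have hw_nonneg : ∀ x, 0 ≤ w x := fun x => by
      by_cases hx : x ∈ U
      · simp only [hwdef]; rw [Set.indicator_of_mem hx]; exact hc_nonneg _
      · simp only [hwdef]; rw [Set.indicator_of_notMem hx]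
    have hw_le_one : ∀ x, w x ≤ 1 := fun x => by
      by_cases hx : x ∈ U
      · simp only [hwdef]; rw [Set.indicator_of_mem hx]; exact hc_le_one _
      · simp only [hwdef]; rw [Set.indicator_of_notMem hx]; norm_num
    have hw_int : Integrable w D := by
      refine Integrable.mono' (integrable_const (1:ℝ)) hw_meas.aestronglyMeasurable
        (Filter.Eventually.of_forall fun x => ?_)
      rw [Real.norm_eq_abs, abs_of_nonneg (hw_nonneg x)]
      exact hw_le_one x
    -- the integral of w equals (W π).toReal
    have hwW : ∫ x, w x ∂D = (W π).toReal := by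
      rw [integral_eq_lintegral_of_nonneg_ae (Filter.Eventually.of_forall hw_nonneg)
        hw_meas.aestronglyMeasurable]
      congr 1
      have hpt : ∀ x, ENNReal.ofReal (w x)
          = ∑' n, Set.indicator (E n) (fun _ => ENNReal.ofReal (c n)) x := by
        intro x
        by_cases hx : x ∈ U
        · have hxE : x ∈ E (nidx x) := hnidx_mem x hx
          rw [show w x = c (nidx x) from by simp only [hwdef]; rw [Set.indicator_of_mem hx]]
          rw [tsum_eq_single (nidx x) (fun m hm => Set.indicator_of_notMem
            (fun hc => hm (hE_nidx x m hc).symm) _)]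
          rw [Set.indicator_of_mem hxE]
        · have hxE : ∀ n, x ∉ E n := fun n hc =>
            hx (Set.mem_iUnion.2 ⟨n, ((hE_mem_iff x n).1 hc).1⟩)
          rw [show w x = 0 from by simp only [hwdef]; rw [Set.indicator_of_notMem hx]]
          simp only [ENNReal.ofReal_zero]
          rw [tsum_congr (fun n => Set.indicator_of_notMem (hxE n) _), tsum_zero]
      rw [lintegral_congr hpt, lintegral_tsum (fun n =>
        ((measurable_const (a := ENNReal.ofReal (c n))).indicator (hE_meas n)).aemeasurable)]
      rw [hWdef]
      exact tsum_congr fun n => by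
        rw [lintegral_indicator_const (hE_meas n), mul_comm]
    by_cases hint : Integrable h D
    · -- integrable case : compare with w via the measurable version of h
      have haesm : AEStronglyMeasurable h D := hint.aestronglyMeasurable
      set h' : X → ℝ := haesm.mk h with hh'def
      have hsm' : StronglyMeasurable h' := haesm.stronglyMeasurable_mk
      have haeeq : h =ᵐ[D] h' := haesm.ae_eq_mk
      obtain ⟨N, hNsub, hNmeas, hNnull⟩ :=
        exists_measurable_superset_of_null (ae_iff.1 haeeq)
      have heqN : ∀ x ∉ N, h x = h' x := by
        intro x hxN
        by_contra hc
        exact hxN (hNsub hc)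
      have hkey : ∀ x ∉ N, h' x ≤ w x := by
        intro x hxN
        by_cases hxS : x ∈ S
        · obtain ⟨k, hk⟩ : ∃ k, e k = x := by
            have : x ∈ Set.range e := hrange ▸ hxS
            exact this
          have hxU : x ∈ U := Set.mem_iUnion.2 ⟨k, hk ▸ hChat_self k⟩
          have hxE : x ∈ E (nidx x) := hnidx_mem x hxU
          have hxChat : x ∈ Chat (nidx x) := ((hE_mem_iff x _).1 hxE).1
          have hins : Insep (e (nidx x)) x := by
            have hthis := hChat_insep (nidx x) k (by rw [hk]; exact hxChat)
            rwa [hk] at hthis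
          by_cases henN : e (nidx x) ∈ N
          · exact absurd ((hins N hNmeas).1 henN) hxN
          · have h'eq : h' x = h' (e (nidx x)) := by
              have hmemB : e (nidx x) ∈ h' ⁻¹' {h' (e (nidx x))} := rfl
              have := (hins (h' ⁻¹' {h' (e (nidx x))})
                (hsm'.measurable (measurableSet_singleton _))).1 hmemB
              exact this
            have heS : e (nidx x) ∈ S := by
              rw [hrange]; exact ⟨nidx x, rfl⟩
            have hΨe : Ψ π (e (nidx x)) = π (e (nidx x)) := by
              simp only [hΨdef]
              rw [if_pos heS]
            have hhe : h (e (nidx x)) = c (nidx x) := by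
              simp only [hhdef, hΨe]; rfl
            have hwx : w x = c (nidx x) := by
              simp only [hwdef]; rw [Set.indicator_of_mem hxU]
            rw [hwx, h'eq, ← heqN _ henN, hhe]
        · have hΨx : Ψ π x = ahat x := by
            simp only [hΨdef]
            rw [if_neg hxS]
          have hx0 : h x = 0 := by
            simp only [hhdef, hΨx, sub_self]
          rw [← heqN _ hxN, hx0]
          exact hw_nonneg x
      have hle_ae : h' ≤ᵐ[D] w := by
        refine ae_iff.2 (measure_mono_null ?_ hNnull)
        intro x hx
        by_contra hxN
        exact hx (hkey x hxN)
      have hint' : Integrable h' D := hint.congr haeeq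
      calc v π = ∫ x, h x ∂D := rfl
        _ = ∫ x, h' x ∂D := integral_congr_ae haeeq
        _ ≤ ∫ x, w x ∂D := integral_mono_ae hint' hw_int hle_ae
        _ = (W π).toReal := hwW
    · -- non-integrable : the integral is zero
      have : v π = 0 := integral_undef hint
      rw [this]
      exact ENNReal.toReal_nonneg
  -- v nonneg
  have hv_nonneg : ∀ π, 0 ≤ v π := by
    intro π
    apply integral_nonneg
    intro x
    exact hg_nonneg x (Ψ π x)
  have hv_aesm : AEStronglyMeasurable v Q :=
    hG'sm.aestronglyMeasurable.congr (hGae.symm.trans hGv)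
  -- Q-side computation
  have hK1 : (1:ℕ) ≤ K := le_trans (by norm_num) hK
  have hKR : (2:ℝ) ≤ (K:ℝ) := by exact_mod_cast hK
  have hQside : ∫⁻ π, W π ∂Q ≤ ENNReal.ofReal (((K : ℝ) - 1) / γ) := by
    have hmeas_cd : ∀ x₁ : X, Measurable (fun π : X → A => ENNReal.ofReal (g x₁ (π x₁))) :=
      fun x₁ => (measurable_of_countable (fun a : A => ENNReal.ofReal (g x₁ a))).comp
        (measurable_pi_apply x₁)
    have hcyl_meas : ∀ (x₁ : X) (a : A), MeasurableSet {π' : X → A | π' x₁ = a} :=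
      fun x₁ a => by
        have : {π' : X → A | π' x₁ = a} = (fun π' : X → A => π' x₁) ⁻¹' {a} := by
          ext π'; simp [Set.mem_preimage]
        rw [this]
        exact (measurable_pi_apply x₁) (measurableSet_singleton a)
    have key : ∀ x₁ : X, ∫⁻ π, ENNReal.ofReal (g x₁ (π x₁)) ∂Q
        ≤ ENNReal.ofReal (((K : ℝ) - 1) / γ) := by
      intro x₁
      have hpt : ∀ π : X → A, ENNReal.ofReal (g x₁ (π x₁)) =
          ∑ a ∈ (univ : Finset A), Set.indicator {π' : X → A | π' x₁ = a}
            (fun _ => ENNReal.ofReal (g x₁ a)) π := by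
        intro π
        rw [Finset.sum_eq_single (π x₁)]
        · rw [Set.indicator_of_mem (by exact rfl : π ∈ {π' : X → A | π' x₁ = π x₁})]
        · intro b _ hb
          exact Set.indicator_of_notMem (fun hc => hb (by exact hc.symm ▸ rfl)) _
        · intro hc
          exact absurd (Finset.mem_univ _) hc
      calc ∫⁻ π, ENNReal.ofReal (g x₁ (π x₁)) ∂Q
          = ∑ a ∈ (univ : Finset A), ENNReal.ofReal (g x₁ a) * Q {π' : X → A | π' x₁ = a} := by
            rw [lintegral_congr hpt, lintegral_finset_sum _
              (fun a _ => (measurable_const (a := ENNReal.ofReal (g x₁ a))).indicator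
                (hcyl_meas x₁ a))]
            exact Finset.sum_congr rfl fun a _ => lintegral_indicator_const (hcyl_meas x₁ a) _
        _ = ∑ a ∈ (univ : Finset A), ENNReal.ofReal (g x₁ a) * ENNReal.ofReal (p x₁ a) := by
            exact Finset.sum_congr rfl fun a _ => by rw [hQ x₁ a]
        _ ≤ ENNReal.ofReal (((K : ℝ) - 1) / γ) := ?_
      rw [← Finset.insert_erase (Finset.mem_univ (ahat x₁)), Finset.sum_insert
        (Finset.notMem_erase _ _)]
      have hhat0 : ENNReal.ofReal (g x₁ (ahat x₁)) * ENNReal.ofReal (p x₁ (ahat x₁)) = 0 := by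
        rw [hg_hat x₁, ENNReal.ofReal_zero, zero_mul]
      rw [hhat0, zero_add]
      have hterm : ∀ a ∈ (univ : Finset A).erase (ahat x₁),
          ENNReal.ofReal (g x₁ a) * ENNReal.ofReal (p x₁ a) ≤ ENNReal.ofReal (1/γ) := by
        intro a ha
        have hane : a ≠ ahat x₁ := Finset.ne_of_mem_erase ha
        rw [← ENNReal.ofReal_mul (hg_nonneg x₁ a)]
        apply ENNReal.ofReal_le_ofReal
        have hpa : p x₁ a = 1 / ((K : ℝ) + γ * (g x₁ a)) := hp_ne x₁ a hane
        set Δ : ℝ := g x₁ a with hΔdef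
        have hΔ0 : 0 ≤ Δ := hg_nonneg x₁ a
        have hden : 0 < (K : ℝ) + γ * Δ := by nlinarith
        rw [hpa, mul_one_div, div_le_div_iff₀ hden hγ]
        nlinarith
      calc ∑ a ∈ (univ : Finset A).erase (ahat x₁),
            ENNReal.ofReal (g x₁ a) * ENNReal.ofReal (p x₁ a)
          ≤ ∑ _a ∈ (univ : Finset A).erase (ahat x₁), ENNReal.ofReal (1/γ) :=
            Finset.sum_le_sum hterm
        _ = ((K - 1 : ℕ) : ENNReal) * ENNReal.ofReal (1/γ) := by
            rw [Finset.sum_const, Finset.card_erase_of_mem (Finset.mem_univ _),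
              Finset.card_univ, nsmul_eq_mul]
        _ = ENNReal.ofReal (((K : ℝ) - 1) / γ) := by
            rw [← ENNReal.ofReal_natCast (K - 1), ← ENNReal.ofReal_mul (by positivity),
              Nat.cast_sub hK1]
            congr 1
            push_cast
            ring
    have hWsum : ∫⁻ π, W π ∂Q
        = ∑' n, D (E n) * ∫⁻ π, ENNReal.ofReal (g (e n) (π (e n))) ∂Q := by
      rw [hWdef]
      rw [lintegral_tsum (fun n => ((hmeas_cd (e n)).const_mul (D (E n))).aemeasurable)]
      exact tsum_congr fun n => lintegral_const_mul _ (hmeas_cd (e n))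
    rw [hWsum]
    calc ∑' n, D (E n) * ∫⁻ π, ENNReal.ofReal (g (e n) (π (e n))) ∂Q
        ≤ ∑' n, D (E n) * ENNReal.ofReal (((K : ℝ) - 1) / γ) :=
          ENNReal.tsum_le_tsum fun n => mul_le_mul_right (key (e n)) _
      _ = (∑' n, D (E n)) * ENNReal.ofReal (((K : ℝ) - 1) / γ) := ENNReal.tsum_mul_right
      _ = D (⋃ n, E n) * ENNReal.ofReal (((K : ℝ) - 1) / γ) := by
          rw [measure_iUnion hE_disj hE_meas]
      _ ≤ 1 * ENNReal.ofReal (((K : ℝ) - 1) / γ) :=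
          mul_le_mul_left prob_le_one _
      _ = ENNReal.ofReal (((K : ℝ) - 1) / γ) := one_mul _
  -- finish
  have step1 : ∫ π, G π ∂Q = ∫ π, v π ∂Q := integral_congr_ae hGv
  have step2 : ∫ π, v π ∂Q = (∫⁻ π, ENNReal.ofReal (v π) ∂Q).toReal :=
    integral_eq_lintegral_of_nonneg_ae (Filter.Eventually.of_forall hv_nonneg) hv_aesm
  have step3 : ∫⁻ π, ENNReal.ofReal (v π) ∂Q ≤ ∫⁻ π, W π ∂Q := by
    apply lintegral_mono
    intro π
    exact ENNReal.ofReal_le_of_le_toReal (hv_le π)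
  have hfin : ENNReal.ofReal (((K : ℝ) - 1) / γ) ≠ ⊤ := ENNReal.ofReal_ne_top
  calc ∫ π, G π ∂Q = (∫⁻ π, ENNReal.ofReal (v π) ∂Q).toReal := by rw [step1, step2]
    _ ≤ (ENNReal.ofReal (((K : ℝ) - 1) / γ)).toReal :=
        ENNReal.toReal_mono hfin (le_trans step3 hQside)
    _ = ((K : ℝ) - 1) / γ := ENNReal.toReal_ofReal (by
        have h2 : (2:ℝ) ≤ (K : ℝ) := by exact_mod_cast hK
        apply div_nonneg (by linarith) hγ.le)
    _ ≤ (K : ℝ) / γ := by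
        have h2 : (2:ℝ) ≤ (K : ℝ) := by exact_mod_cast hK
        exact div_le_div_of_nonneg_right (by linarith) hγ.le
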